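/- There exist a constant c > 0 and an integer k₀ such that for every integer k ≥ k₀ and every integer ℓ with c ≤ ℓ ≤ k/c, the following holds: if π is a uniformly random permutation of {1,…,k}, q = ⌈k/ℓ⌉, and R = min{π(1),…,π(q)}, then Pr(ℓ/5 < R ≤ ℓ) > 1/13. -/

import Mathlib

open scoped Classical

open Finset Equiv

/-- For a permutation `π` of `{1,…,k}` (modelled as `Equiv.Perm (Fin k)` with values
`(π j).val + 1 ∈ {1,…,k}`), `minOfFirst k q π` is `R = min {π(1),…,π(q)}`. -/
noncomputable def minOfFirst (k q : ℕ) (π : Equiv.Perm (Fin k)) : ℕ :=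
  sInf {v : ℕ | ∃ j : Fin k, (j : ℕ) < q ∧ v = (π j : ℕ) + 1}

/-- Number of permutations of `Fin k` extending a given embedding on the first `q`
positions is `(k-q)!`. -/
lemma card_perm_extend {k q : ℕ} (hq : q ≤ k) (f : Fin q ↪ Fin k) :
    Fintype.card {π : Equiv.Perm (Fin k) // ∀ j : Fin q, π (Fin.castLE hq j) = f j}
      = (k - q).factorial := by
  classical
  set e : Fin q ↪ Fin k := Fin.castLEEmb hq with he
  have ecoe : ∀ j : Fin q, e j = Fin.castLE hq j := fun _ => rfl
  set s : Set (Fin k) := Set.range e with hs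
  set t : Set (Fin k) := Set.range f with ht
  set e₀ : s ≃ t := e.toEquivRange.symm.trans f.toEquivRange with he₀
  have key : ∀ (j : Fin q) (h : e j ∈ s), (e₀ ⟨e j, h⟩ : Fin k) = f j := by
    intro j h
    have h2 : e.toEquivRange.symm ⟨e j, h⟩ = j := by
      have : (⟨e j, h⟩ : s) = e.toEquivRange j := by apply Subtype.ext; rfl
      rw [this, Equiv.symm_apply_apply]
    rw [he₀]
    rw [Equiv.trans_apply, h2]
    rfl
  have h1 : ∀ π : Equiv.Perm (Fin k),
      (∀ j : Fin q, π (Fin.castLE hq j) = f j) ↔ (∀ x : s, π x = e₀ x) := by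
    intro π
    have h' : (∀ j : Fin q, π (Fin.castLE hq j) = f j) ↔ ∀ j : Fin q, π (e j) = f j := by
      exact forall_congr' (fun j => by rw [ecoe])
    rw [h']
    constructor
    · rintro h ⟨x, j, rfl⟩
      exact (h j).trans (key j _).symm
    · intro h j
      exact (h ⟨e j, Set.mem_range_self j⟩).trans (key j _)
  have E1 : {π : Equiv.Perm (Fin k) // ∀ j : Fin q, π (Fin.castLE hq j) = f j}
      ≃ {π : Equiv.Perm (Fin k) // ∀ x : s, π x = e₀ x} :=
    Equiv.subtypeEquivRight h1
  have E2 := Equiv.Set.compl e₀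
  have hcs : Fintype.card (sᶜ : Set (Fin k)) = k - q := by
    rw [Fintype.card_compl_set]
    simp [hs, Set.card_range_of_injective e.injective]
  have hct : Fintype.card (tᶜ : Set (Fin k)) = k - q := by
    rw [Fintype.card_compl_set]
    simp [ht, Set.card_range_of_injective f.injective]
  rw [Fintype.card_congr (E1.trans E2),
    Fintype.card_equiv (Fintype.equivOfCardEq (hcs.trans hct.symm)), hcs]

lemma card_subtype_ge (k t : ℕ) (ht : t ≤ k) :
    Fintype.card {x : Fin k // t ≤ (x : ℕ)} = k - t := by
  have E : {x : Fin k // t ≤ (x : ℕ)} ≃ Fin (k - t) :=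
    { toFun := fun x => ⟨(x : Fin k).val - t, by have := (x : Fin k).isLt; have := x.2; omega⟩
      invFun := fun y => ⟨⟨y.val + t, by have := y.isLt; omega⟩, by simp⟩
      left_inv := fun x => by
        apply Subtype.ext; apply Fin.ext; have := x.2; simp; omega
      right_inv := fun y => by apply Fin.ext; simp }
  rw [Fintype.card_congr E, Fintype.card_fin]

/-- The number of permutations of `Fin k` whose first `q` values are all `≥ t`. -/
lemma card_filter_forall {k q : ℕ} (hq : q ≤ k) (t : ℕ) (ht : t ≤ k) :
    (Finset.univ.filter fun π : Equiv.Perm (Fin k) =>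
        ∀ j : Fin k, (j : ℕ) < q → t ≤ (π j : ℕ)).card
      = (k - t).descFactorial q * (k - q).factorial := by
  classical
  set Φ : Equiv.Perm (Fin k) → (Fin q ↪ Fin k) :=
    fun π => (Fin.castLEEmb hq).trans π.toEmbedding with hΦ
  have hΦapp : ∀ π j, Φ π j = π (Fin.castLE hq j) := fun _ _ => rfl
  set B : Finset (Fin q ↪ Fin k) :=
    Finset.univ.filter (fun f => ∀ j : Fin q, t ≤ (f j : ℕ)) with hB
  have hcond : ∀ π : Equiv.Perm (Fin k),
      (∀ j : Fin k, (j : ℕ) < q → t ≤ (π j : ℕ)) ↔ (∀ j : Fin q, t ≤ (Φ π j : ℕ)) := by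
    intro π
    constructor
    · intro h j
      exact h (Fin.castLE hq j) (by simpa using j.isLt)
    · intro h j hj
      have := h ⟨j.val, hj⟩
      simpa [hΦapp, Fin.castLE] using this
  rw [Finset.filter_congr (fun π _ => by rw [hcond π])]
  rw [Finset.card_eq_sum_card_fiberwise (f := Φ) (t := B)
    (fun π hπ => by
      simp only [hB, Finset.mem_coe, Finset.mem_filter, Finset.mem_univ, true_and] at *
      exact hπ)]
  have hfiber : ∀ f ∈ B, ((Finset.univ.filter fun π : Equiv.Perm (Fin k) =>
      ∀ j : Fin q, t ≤ (Φ π j : ℕ)).filter fun π => Φ π = f).card = (k - q).factorial := by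
    intro f hf
    rw [Finset.filter_filter]
    have : ∀ π : Equiv.Perm (Fin k),
        ((∀ j : Fin q, t ≤ (Φ π j : ℕ)) ∧ Φ π = f) ↔
          (∀ j : Fin q, π (Fin.castLE hq j) = f j) := by
      intro π
      simp only [hB, Finset.mem_filter, Finset.mem_univ, true_and] at hf
      constructor
      · rintro ⟨-, rfl⟩
        intro j; rfl
      · intro h
        have hEq : Φ π = f := by
          ext j
          rw [hΦapp, h j]
        exact ⟨by rw [hEq]; exact hf, hEq⟩
    rw [Finset.filter_congr (fun π _ => by rw [this π]), ← card_perm_extend hq f,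
      Fintype.card_subtype]
  rw [Finset.sum_congr rfl hfiber, Finset.sum_const, smul_eq_mul]
  congr 1
  have : B.card = Fintype.card {f : Fin q ↪ Fin k // ∀ j : Fin q, t ≤ (f j : ℕ)} :=
    (Fintype.card_subtype _).symm
  rw [this]
  have E : {f : Fin q ↪ Fin k // ∀ j : Fin q, t ≤ (f j : ℕ)}
      ≃ (Fin q ↪ {x : Fin k // t ≤ (x : ℕ)}) :=
    { toFun := fun fp => ⟨fun j => ⟨fp.1 j, fp.2 j⟩,
        fun a b hab => fp.1.injective (congrArg Subtype.val hab)⟩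
      invFun := fun g => ⟨⟨fun j => (g j : Fin k),
        fun a b hab => g.injective (Subtype.ext hab)⟩, fun j => (g j).2⟩
      left_inv := fun fp => by apply Subtype.ext; ext j; rfl
      right_inv := fun g => by ext j; rfl }
  rw [Fintype.card_congr E, Fintype.card_embedding_eq, card_subtype_ge k t ht, Fintype.card_fin]

lemma lt_minOfFirst_iff {k q : ℕ} (hq0 : 0 < q) (hqk : q ≤ k) (π : Equiv.Perm (Fin k)) (t : ℕ) :
    t < minOfFirst k q π ↔ ∀ j : Fin k, (j : ℕ) < q → t ≤ (π j : ℕ) := by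
  have hk : 0 < k := lt_of_lt_of_le hq0 hqk
  have hne : {v : ℕ | ∃ j : Fin k, (j : ℕ) < q ∧ v = (π j : ℕ) + 1}.Nonempty :=
    ⟨(π ⟨0, hk⟩ : ℕ) + 1, ⟨⟨0, hk⟩, hq0, rfl⟩⟩
  unfold minOfFirst
  constructor
  · intro h j hj
    have hmem : (π j : ℕ) + 1 ∈ {v : ℕ | ∃ j : Fin k, (j : ℕ) < q ∧ v = (π j : ℕ) + 1} :=
      ⟨j, hj, rfl⟩
    have := Nat.sInf_le hmem
    omega
  · intro h
    obtain ⟨j, hj, hv⟩ := Nat.sInf_mem hne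
    rw [hv]
    have := h j hj
    omega

lemma prob_gt {k q : ℕ} (hq0 : 0 < q) (hqk : q ≤ k) (t : ℕ) (ht : t ≤ k) :
    ((Finset.univ.filter fun π : Equiv.Perm (Fin k) => t < minOfFirst k q π).card : ℝ)
        / (Nat.factorial k : ℝ)
      = ((k - t).descFactorial q : ℝ) / (k.descFactorial q : ℝ) := by
  rw [Finset.filter_congr (fun π _ => by rw [lt_minOfFirst_iff hq0 hqk π t]),
    card_filter_forall hqk t ht, ← Nat.factorial_mul_descFactorial hqk]
  have h1 : ((k - q).factorial : ℝ) ≠ 0 := Nat.cast_ne_zero.mpr (Nat.factorial_ne_zero _)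
  have h2 : (k.descFactorial q : ℝ) ≠ 0 :=
    Nat.cast_ne_zero.mpr (by rw [Ne, Nat.descFactorial_eq_zero_iff_lt]; omega)
  push_cast
  field_simp

set_option maxHeartbeats 2000000 in
/-- There are `c > 0` and `k₀` such that for all `k ≥ k₀` and integers `c ≤ ℓ ≤ k/c`:
for a uniformly random permutation `π` of `{1,…,k}`, with `q = ⌈k/ℓ⌉` and
`R = min{π(1),…,π(q)}`, we have `Pr(ℓ/5 < R ≤ ℓ) > 1/13`. -/
theorem good_event_prob :
    ∃ c : ℝ, 0 < c ∧ ∃ k₀ : ℕ, ∀ k : ℕ, k₀ ≤ k → ∀ ℓ : ℕ,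
      c ≤ (ℓ : ℝ) → (ℓ : ℝ) ≤ (k : ℝ) / c →
      (1 : ℝ) / 13 <
        (((Finset.univ : Finset (Equiv.Perm (Fin k))).filter (fun π =>
            (ℓ : ℝ) / 5 < (minOfFirst k ⌈(k : ℝ) / (ℓ : ℝ)⌉₊ π : ℝ) ∧
            minOfFirst k ⌈(k : ℝ) / (ℓ : ℝ)⌉₊ π ≤ ℓ)).card : ℝ) /
          (Nat.factorial k : ℝ) := by
  refine ⟨100, by norm_num, 0, fun k _ ℓ hcl hlk => ?_⟩
  have hl100 : (100 : ℝ) ≤ (ℓ : ℝ) := hcl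
  have hlposR : (0 : ℝ) < (ℓ : ℝ) := by linarith
  have hlpos : 0 < ℓ := by exact_mod_cast hlposR
  have hkR : (100 : ℝ) * ℓ ≤ k := by
    have := (le_div_iff₀ (by norm_num : (0:ℝ) < 100)).mp hlk
    linarith
  have hk10000 : (10000 : ℝ) ≤ (k : ℝ) := by nlinarith
  have hkposR : (0 : ℝ) < (k : ℝ) := by linarith
  have hkpos : 0 < k := by exact_mod_cast hkposR
  set q := ⌈(k : ℝ) / (ℓ : ℝ)⌉₊ with hqdef
  have hq0 : 0 < q := Nat.ceil_pos.mpr (div_pos hkposR hlposR)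
  have hqk : q ≤ k := Nat.ceil_le.mpr (by
    rw [div_le_iff₀ hlposR]; nlinarith)
  have hqlb : (k : ℝ) / ℓ ≤ q := Nat.le_ceil _
  have hqub : (q : ℝ) ≤ (k : ℝ) / ℓ + 1 :=
    le_of_lt (Nat.ceil_lt_add_one (by positivity))
  set t₀ := ℓ / 5 with ht₀def
  have ht₀cast : (t₀ : ℝ) ≤ (ℓ : ℝ) / 5 := by
    have := Nat.cast_div_le (α := ℝ) (m := ℓ) (n := 5)
    simpa using this
  have ht₀l : t₀ ≤ ℓ := Nat.div_le_self _ _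
  have hlkR : (ℓ : ℝ) ≤ k := by nlinarith
  have hlk' : ℓ ≤ k := by exact_mod_cast hlkR
  have hkl100 : (k : ℝ) / ℓ ≤ (k : ℝ) / 100 :=
    div_le_div_of_nonneg_left (le_of_lt hkposR) (by norm_num) hl100
  have hqub' : (q : ℝ) ≤ (k : ℝ) / 100 + 1 := by linarith
  have hlqk : ℓ + q ≤ k := by
    have : (ℓ : ℝ) + q ≤ k := by
      have : (ℓ : ℝ) ≤ k / 100 := hlk
      nlinarith
    exact_mod_cast this
  have hkqR : (0 : ℝ) < (k : ℝ) - q := by nlinarith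
  -- floor fact
  have hfloor5 : ⌊(ℓ : ℝ) / 5⌋₊ = t₀ := by
    rw [show (5 : ℝ) = ((5 : ℕ) : ℝ) from by norm_num, Nat.floor_div_natCast, Nat.floor_natCast]
  have hcondR : ∀ n : ℕ, ((ℓ : ℝ) / 5 < (n : ℝ)) ↔ t₀ < n := by
    intro n
    rw [← Nat.floor_lt (by positivity : (0:ℝ) ≤ (ℓ : ℝ) / 5), hfloor5]
  -- rewrite the event
  have hEvent : ((Finset.univ : Finset (Equiv.Perm (Fin k))).filter (fun π =>
        (ℓ : ℝ) / 5 < (minOfFirst k q π : ℕ) ∧ minOfFirst k q π ≤ ℓ))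
      = (Finset.univ.filter fun π : Equiv.Perm (Fin k) =>
          t₀ < minOfFirst k q π ∧ minOfFirst k q π ≤ ℓ) := by
    apply Finset.filter_congr
    intro π _
    rw [hcondR]
  rw [hEvent]
  -- split the card
  have hdis : Disjoint
      (Finset.univ.filter fun π : Equiv.Perm (Fin k) =>
        t₀ < minOfFirst k q π ∧ minOfFirst k q π ≤ ℓ)
      (Finset.univ.filter fun π : Equiv.Perm (Fin k) => ℓ < minOfFirst k q π) := by
    rw [Finset.disjoint_left]
    intro π h1 h2
    simp only [Finset.mem_filter] at h1 h2
    omega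
  have hsplit : (Finset.univ.filter fun π : Equiv.Perm (Fin k) =>
        t₀ < minOfFirst k q π).card
      = (Finset.univ.filter fun π : Equiv.Perm (Fin k) =>
          t₀ < minOfFirst k q π ∧ minOfFirst k q π ≤ ℓ).card
        + (Finset.univ.filter fun π : Equiv.Perm (Fin k) => ℓ < minOfFirst k q π).card := by
    rw [← Finset.card_union_of_disjoint hdis, ← Finset.filter_or]
    apply congrArg
    apply Finset.filter_congr
    intro π _
    constructor
    · intro h
      by_cases hc : minOfFirst k q π ≤ ℓ
      · exact Or.inl ⟨h, hc⟩
      · exact Or.inr (by omega)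
    · rintro (⟨h, -⟩ | h)
      · exact h
      · omega
  have hfactne : (Nat.factorial k : ℝ) ≠ 0 := Nat.cast_ne_zero.mpr (Nat.factorial_ne_zero _)
  have key : ((Finset.univ.filter fun π : Equiv.Perm (Fin k) =>
        t₀ < minOfFirst k q π ∧ minOfFirst k q π ≤ ℓ).card : ℝ) / (Nat.factorial k : ℝ)
      = ((k - t₀).descFactorial q : ℝ) / (k.descFactorial q : ℝ)
        - ((k - ℓ).descFactorial q : ℝ) / (k.descFactorial q : ℝ) := by
    rw [← prob_gt hq0 hqk t₀ (le_trans ht₀l hlk'), ← prob_gt hq0 hqk ℓ hlk',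
      eq_sub_iff_add_eq, ← add_div]
    congr 1
    exact_mod_cast hsplit.symm
  rw [key]
  -- product form of the ratio
  have hprod : ∀ t : ℕ, t + q ≤ k →
      ((k - t).descFactorial q : ℝ) / (k.descFactorial q : ℝ)
        = ∏ i ∈ Finset.range q, (((k : ℝ) - t - i) / ((k : ℝ) - i)) := by
    intro t htq
    rw [Nat.descFactorial_eq_prod_range, Nat.descFactorial_eq_prod_range,
      Nat.cast_prod, Nat.cast_prod, ← Finset.prod_div_distrib]
    apply Finset.prod_congr rfl
    intro i hi
    rw [Finset.mem_range] at hi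
    have h1 : ((k - t - i : ℕ) : ℝ) = (k : ℝ) - t - i := by
      rw [Nat.sub_sub, Nat.cast_sub (by omega), Nat.cast_add]
      ring
    have h2 : ((k - i : ℕ) : ℝ) = (k : ℝ) - i := Nat.cast_sub (by omega)
    rw [h1, h2]
  -- upper bound for t = ℓ
  have hub : ((k - ℓ).descFactorial q : ℝ) / (k.descFactorial q : ℝ) ≤ Real.exp (-1) := by
    rw [hprod ℓ hlqk]
    have step : ∏ i ∈ Finset.range q, (((k : ℝ) - ℓ - i) / ((k : ℝ) - i))
        ≤ ∏ _i ∈ Finset.range q, Real.exp (-(ℓ : ℝ) / k) := by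
      apply Finset.prod_le_prod
      · intro i hi
        rw [Finset.mem_range] at hi
        have : (ℓ : ℝ) + i ≤ k := by
          have : ((ℓ + i : ℕ) : ℝ) ≤ k := by exact_mod_cast (by omega : ℓ + i ≤ k)
          push_cast at this; linarith
        apply div_nonneg <;> nlinarith
      · intro i hi
        rw [Finset.mem_range] at hi
        have hiq : (i : ℝ) < q := by exact_mod_cast hi
        have hki : (0 : ℝ) < (k : ℝ) - i := by nlinarith
        have step1 : ((k : ℝ) - ℓ - i) / ((k : ℝ) - i) ≤ 1 - (ℓ : ℝ) / k := by
          rw [div_le_iff₀ hki]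
          have hexp : (1 - (ℓ : ℝ) / k) * ((k : ℝ) - i)
              = (k : ℝ) - i - ℓ + (ℓ : ℝ) * i / k := by
            field_simp
            ring
          rw [hexp]
          have : (0 : ℝ) ≤ (ℓ : ℝ) * i / k := by positivity
          linarith
        have harg : -(ℓ : ℝ) / k = -((ℓ : ℝ) / k) := neg_div _ _
        rw [harg]
        have step2 := Real.add_one_le_exp (-((ℓ : ℝ) / k))
        linarith
    refine le_trans step ?_
    rw [Finset.prod_const, ← Real.exp_nat_mul]
    apply Real.exp_le_exp.mpr
    have hcross : (k : ℝ) ≤ q * ℓ := by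
      have := (div_le_iff₀ hlposR).mp hqlb
      linarith
    rw [Finset.card_range]
    have hrw : (q : ℝ) * (-(ℓ : ℝ) / k) = -(((q : ℝ) * ℓ) / k) := by ring
    rw [hrw, neg_le_neg_iff, le_div_iff₀ hkposR, one_mul]
    linarith
  -- lower bound for t = t₀
  have hfrac1 : (t₀ : ℝ) / ((k : ℝ) - q) ≤ 1 := by
    rw [div_le_one hkqR]
    nlinarith
  have hlb : 1 - (q : ℝ) * t₀ / ((k : ℝ) - q)
      ≤ ((k - t₀).descFactorial q : ℝ) / (k.descFactorial q : ℝ) := by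
    rw [hprod t₀ (by omega)]
    have hBern : 1 - (q : ℝ) * t₀ / ((k : ℝ) - q)
        ≤ (1 - (t₀ : ℝ) / ((k : ℝ) - q)) ^ q := by
      have := one_add_mul_le_pow
        (a := -((t₀ : ℝ) / ((k : ℝ) - q))) (by linarith) q
      calc 1 - (q : ℝ) * t₀ / ((k : ℝ) - q)
          = 1 + (q : ℝ) * (-((t₀ : ℝ) / ((k : ℝ) - q))) := by ring
        _ ≤ (1 + -((t₀ : ℝ) / ((k : ℝ) - q))) ^ q := this
        _ = (1 - (t₀ : ℝ) / ((k : ℝ) - q)) ^ q := by ring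
    refine le_trans hBern ?_
    have hrw2 : (1 - (t₀ : ℝ) / ((k : ℝ) - q)) ^ q
        = ∏ _i ∈ Finset.range q, (1 - (t₀ : ℝ) / ((k : ℝ) - q)) := by
      rw [Finset.prod_const, Finset.card_range]
    rw [hrw2]
    apply Finset.prod_le_prod
    · intro i hi
      linarith
    · intro i hi
      rw [Finset.mem_range] at hi
      have hiq : (i : ℝ) < q := by exact_mod_cast hi
      have hki : (0 : ℝ) < (k : ℝ) - i := by nlinarith
      have e1 : ((k : ℝ) - t₀ - i) / ((k : ℝ) - i) = 1 - (t₀ : ℝ) / ((k : ℝ) - i) := by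
        field_simp
        ring
      rw [e1]
      have hmono : (t₀ : ℝ) / ((k : ℝ) - i) ≤ (t₀ : ℝ) / ((k : ℝ) - q) := by
        apply div_le_div_of_nonneg_left (by positivity) hkqR
        nlinarith
      linarith
  -- final numeric estimates
  have hA : (q : ℝ) * t₀ ≤ (k : ℝ) / 5 + (ℓ : ℝ) / 5 := by
    have hmul : (q : ℝ) * t₀ ≤ ((k : ℝ) / ℓ + 1) * ((ℓ : ℝ) / 5) :=
      mul_le_mul hqub ht₀cast (by positivity) (by positivity)
    have hid : ((k : ℝ) / ℓ + 1) * ((ℓ : ℝ) / 5) = (k : ℝ) / 5 + (ℓ : ℝ) / 5 := by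
      field_simp
    linarith
  have hB : (0.9899 : ℝ) * k ≤ (k : ℝ) - q := by nlinarith
  have hC : (q : ℝ) * t₀ / ((k : ℝ) - q) ≤ 0.21 := by
    rw [div_le_iff₀ hkqR]
    nlinarith
  have hD : Real.exp (-1) ≤ 0.368 := by
    have hmul : Real.exp (-1) * Real.exp 1 = 1 := by
      rw [← Real.exp_add]; norm_num
    nlinarith [Real.exp_one_gt_d9, Real.exp_pos (-1 : ℝ)]
  linarith
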